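/- arXiv:1812.09377 — 2 statements merged into one kernel-verified Lean document; each statement's English description precedes it below -/
import Mathlib

section
/- Let k ≥ 0 and n ≥ 2k, and let λ[n] = (n−k, 1^k) ⊢ n be the hook partition with first part n−k and k parts equal to 1. Then for every w ∈ 𝔖_n, χ^{λ[n]}(w) = (−1)^k Σ_{j=0}^{k} Σ_{μ ⊨ j} (−1)^{ℓ(μ)} ζ^μ(w), where the inner sum is over all compositions μ of j (with the empty composition of 0 contributing ζ = 1). -/
open scoped Classical

/-- A finset `s ⊆ Fin n` is a cycle (orbit) of the permutation `w`;
fixed points count as cycles of length 1. -/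
def IsCycleSetOf {n : ℕ} (w : Equiv.Perm (Fin n)) (s : Finset (Fin n)) : Prop :=
  ∃ x : Fin n, ∀ y : Fin n, y ∈ s ↔ w.SameCycle x y

/-- The finset of cycles (orbits) of `w`, fixed points included as 1-cycles. -/
noncomputable def cyclesOf {n : ℕ} (w : Equiv.Perm (Fin n)) : Finset (Finset (Fin n)) :=
  Finset.univ.filter (IsCycleSetOf w)

/-- `cycCount w i` is `c_i(w)`, the number of cycles of `w` of length `i`. -/
noncomputable def cycCount {n : ℕ} (w : Equiv.Perm (Fin n)) (i : ℕ) : ℕ :=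
  ((cyclesOf w).filter fun s => s.card = i).card

/-- The cycle type of `w` as a multiset, fixed points included as parts equal to 1. -/
noncomputable def fullCycleType {n : ℕ} (w : Equiv.Perm (Fin n)) : Multiset ℕ :=
  (cyclesOf w).val.map Finset.card

/-- `zeta w lam` is `ζ^lam(w)`, the number of ordered brick tilings of the
composition/partition `lam` (given as a list of parts) by `w`:  tuples
`(S_1, …, S_r)` of pairwise disjoint sets of cycles of `w` such that the lengths of the
cycles in `S_j` sum to `lam_j`. -/
noncomputable def zeta {n : ℕ} (w : Equiv.Perm (Fin n)) (lam : List ℕ) : ℕ :=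
  Nat.card {L : Fin lam.length → Finset (Finset (Fin n)) //
    (∀ i, ∀ c ∈ L i, c ∈ cyclesOf w) ∧
    (∀ i j, i ≠ j → Disjoint (L i) (L j)) ∧
    ∀ i, (L i).sum Finset.card = lam.get i}

/-- `xi w mu` is `ξ^mu(w)`, the number of unordered brick tilings of `mu`
(a multiset of parts) by `w`: sets of pairwise disjoint nonempty sets of cycles of `w`
whose multiset of total lengths is `mu`. -/
noncomputable def xi {n : ℕ} (w : Equiv.Perm (Fin n)) (mu : Multiset ℕ) : ℕ :=
  Nat.card {T : Finset (Finset (Finset (Fin n))) //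
    (∀ S ∈ T, ∀ c ∈ S, c ∈ cyclesOf w) ∧
    (∀ S ∈ T, S.Nonempty) ∧
    ((T : Set (Finset (Finset (Fin n)))).Pairwise Disjoint) ∧
    T.val.map (fun S => S.sum Finset.card) = mu}

/-- `eta w mu` is `η^mu(w)`, the number of unordered crackless brick tilings of `mu`
by `w`: sets of distinct cycles of `w` whose multiset of lengths is `mu`. -/
noncomputable def eta {n : ℕ} (w : Equiv.Perm (Fin n)) (mu : Multiset ℕ) : ℕ :=
  Nat.card {T : Finset (Finset (Fin n)) //
    (∀ c ∈ T, c ∈ cyclesOf w) ∧ T.val.map Finset.card = mu}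

/-- The irreducible character value `χ^lam(w)` defined via Frobenius's formula:
the coefficient of `x_1^{lam_1+ℓ-1} ⋯ x_ℓ^{lam_ℓ}` in
`∏_{i<j}(x_i - x_j) · ∏_{cycles c of w} (x_1^{|c|} + ⋯ + x_ℓ^{|c|})`. -/
noncomputable def chiFrob {n : ℕ} (w : Equiv.Perm (Fin n)) (lam : List ℕ) : ℤ :=
  MvPolynomial.coeff
    (Finsupp.equivFunOnFinite.symm fun i : Fin lam.length =>
      lam.get i + (lam.length - 1 - (i : ℕ)))
    ((∏ p ∈ Finset.univ.filter (fun p : Fin lam.length × Fin lam.length => p.1 < p.2),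
        (MvPolynomial.X p.1 - MvPolynomial.X p.2)) *
      ∏ c ∈ cyclesOf w, ∑ i : Fin lam.length,
        (MvPolynomial.X i : MvPolynomial (Fin lam.length) ℤ) ^ c.card)


open Equiv Equiv.Perm MvPolynomial

section CycleLemmas
variable {n : ℕ} (w : Equiv.Perm (Fin n))

noncomputable def cls (y : Fin n) : Finset (Fin n) := Finset.univ.filter (w.SameCycle y)

lemma cls_mem (y : Fin n) : cls w y ∈ cyclesOf w := by
  simp only [cyclesOf, Finset.mem_filter, Finset.mem_univ, true_and]
  exact ⟨y, fun z => by simp [cls]⟩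

lemma mem_cls (y : Fin n) : y ∈ cls w y := by simp [cls, Equiv.Perm.SameCycle.rfl]

lemma cls_eq_of_mem {s : Finset (Fin n)} (hs : s ∈ cyclesOf w) {y : Fin n} (hy : y ∈ s) :
    s = cls w y := by
  simp only [cyclesOf, Finset.mem_filter] at hs
  obtain ⟨x, hx⟩ := hs.2
  ext z
  simp only [cls, Finset.mem_filter, Finset.mem_univ, true_and, hx]
  exact ⟨fun h => ((hx y).1 hy).symm.trans h, fun h => ((hx y).1 hy).trans h⟩

lemma cycles_nonempty {s : Finset (Fin n)} (hs : s ∈ cyclesOf w) : s.Nonempty := by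
  simp only [cyclesOf, Finset.mem_filter] at hs
  obtain ⟨x, hx⟩ := hs.2
  exact ⟨x, (hx x).2 (Equiv.Perm.SameCycle.rfl)⟩

lemma cycles_disjoint {s t : Finset (Fin n)} (hs : s ∈ cyclesOf w) (ht : t ∈ cyclesOf w)
    (hst : s ≠ t) : Disjoint s t := by
  rw [Finset.disjoint_left]
  intro a ha hat
  exact hst ((cls_eq_of_mem w hs ha).trans (cls_eq_of_mem w ht hat).symm)

lemma cycles_biUnion : ((cyclesOf w).biUnion fun s => s) = Finset.univ := by
  ext y
  simp only [Finset.mem_biUnion, Finset.mem_univ, iff_true]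
  exact ⟨cls w y, cls_mem w y, mem_cls w y⟩

lemma cycles_sum_card : ∑ c ∈ cyclesOf w, c.card = n := by
  rw [← Finset.card_biUnion (fun s hs t ht hst => cycles_disjoint w hs ht hst),
    cycles_biUnion]
  simp

end CycleLemmas

section PermLayer
variable (k : ℕ)
def idx (j : ℕ) : Fin (k + 1) := ⟨(k + 1 - j) % (k + 1), Nat.mod_lt _ (Nat.succ_pos k)⟩

lemma idx_val {j : ℕ} (h1 : 1 ≤ j) (hj : j ≤ k) : ((idx k j : Fin (k+1)) : ℕ) = k + 1 - j := by
  simp only [idx]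
  exact Nat.mod_eq_of_lt (by omega)

lemma idx_ne_zero {j : ℕ} (h1 : 1 ≤ j) (hj : j ≤ k) : idx k j ≠ 0 := by
  intro h
  have := congrArg (Fin.val) h
  rw [idx_val k h1 hj] at this
  simp at this
  omega

lemma idx_inj {j j' : ℕ} (h1 : 1 ≤ j) (hj : j ≤ k) (h1' : 1 ≤ j') (hj' : j' ≤ k)
    (h : idx k j = idx k j') : j = j' := by
  have := congrArg (Fin.val) h
  rw [idx_val k h1 hj, idx_val k h1' hj'] at this
  omega

def rho0 : Perm (Fin (k + 1)) := (finRotate (k + 1)) * (Fin.revPerm)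

lemma rho0_apply (x : Fin (k + 1)) :
    ((rho0 k x : Fin (k+1)) : ℕ) = if (x : ℕ) = 0 then 0 else k + 1 - (x : ℕ) := by
  rcases eq_or_ne x 0 with rfl | hx0
  · simp [rho0, Fin.rev_zero, finRotate_last]
  · have hv : (x : ℕ) ≠ 0 := fun h => hx0 (Fin.ext (by simpa using h))
    have hlt : Fin.rev x < Fin.last k := by
      rw [Fin.lt_iff_val_lt_val, Fin.val_rev, Fin.val_last]
      omega
    simp only [rho0, Perm.mul_apply, Fin.revPerm_apply, finRotate_succ_apply]
    rw [Fin.val_add_one_of_lt hlt, Fin.val_rev, if_neg hv]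
    omega

lemma sign_rho0 :
    Perm.sign (rho0 k) = (-1 : ℤˣ) ^ k * Perm.sign (Fin.revPerm : Perm (Fin (k+1))) := by
  simp [rho0, sign_finRotate]

def eFun : List ℕ → Fin (k + 1) → ℕ
  | [], _ => 0
  | a :: l, x => if x = idx k (a + l.sum) then a else eFun l x

def rho : List ℕ → Perm (Fin (k + 1))
  | [] => rho0 k
  | a :: l => rho l * Equiv.swap 0 (idx k (a + l.sum))

lemma sign_rho (l : List ℕ) (hpos : ∀ b ∈ l, 0 < b) (hsum : l.sum ≤ k) :
    Perm.sign (rho k l) =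
      (-1 : ℤˣ) ^ l.length * ((-1 : ℤˣ) ^ k * Perm.sign (Fin.revPerm : Perm (Fin (k+1)))) := by
  induction l with
  | nil => simpa [rho] using sign_rho0 k
  | cons a l ih =>
    have h1 : 1 ≤ a + l.sum := by have := hpos a (by simp); omega
    have h2 : a + l.sum ≤ k := by simpa using hsum
    rw [rho, Perm.sign_mul, sign_swap (Ne.symm (idx_ne_zero k h1 h2)),
      ih (fun b hb => hpos b (by simp [hb])) (by simp at hsum ⊢; omega)]
    simp [pow_succ]

lemma eFun_le (l : List ℕ) (hsum : l.sum ≤ k) (x : Fin (k+1)) :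
    eFun k l x ≤ k + 1 - (x : ℕ) := by
  induction l with
  | nil => simp [eFun]
  | cons a l ih =>
    have h1 : 1 ≤ a + l.sum ∨ a + l.sum = 0 := by omega
    simp only [eFun]
    split_ifs with h
    · subst h
      rcases h1 with h1 | h1
      · rw [idx_val k h1 (by simp at hsum; omega)]
        simp at hsum
        omega
      · omega
    · exact ih (by simp at hsum ⊢; omega)

lemma eFun_not_pos (l : List ℕ) (hpos : ∀ b ∈ l, 0 < b) (hsum : l.sum ≤ k) (x : Fin (k+1))
    (hx : ∀ t : Fin l.length, x ≠ idx k ((l.drop (t : ℕ)).sum)) : eFun k l x = 0 := by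
  induction l with
  | nil => simp [eFun]
  | cons a l ih =>
    simp only [eFun]
    rw [if_neg]
    · refine ih (fun b hb => hpos b (by simp [hb])) (by simp at hsum ⊢; omega) (fun t => ?_)
      have := hx ⟨(t : ℕ) + 1, by simpa using t.isLt⟩
      simpa using this
    · have := hx ⟨0, by simp⟩
      simpa using this

lemma drop_sum_pos (l : List ℕ) (hpos : ∀ b ∈ l, 0 < b) (t : Fin l.length) :
    0 < (l.drop (t : ℕ)).sum := by
  have hne : l.drop (t : ℕ) ≠ [] := by
    intro h
    have := congrArg List.length h
    simp at this
    omega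
  obtain ⟨b, hb⟩ := List.exists_mem_of_ne_nil _ hne
  have hbl : b ∈ l := List.mem_of_mem_drop hb
  have := hpos b hbl
  have hle : b ≤ (l.drop (t : ℕ)).sum :=
    List.single_le_sum (fun c hc => Nat.zero_le c) b hb
  omega

lemma drop_sum_le (l : List ℕ) (t : ℕ) : (l.drop t).sum ≤ l.sum := by
  conv_rhs => rw [← List.take_append_drop t l]
  rw [List.sum_append]
  omega

lemma rho_apply (l : List ℕ) (hpos : ∀ b ∈ l, 0 < b) (hsum : l.sum ≤ k) (x : Fin (k+1)) :
    ((rho k l x : Fin (k+1)) : ℕ) =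
      if (x : ℕ) = 0 then l.sum else k + 1 - (x : ℕ) - eFun k l x := by
  induction l generalizing x with
  | nil => simpa [rho, eFun] using rho0_apply k x
  | cons a l ih =>
    have ha : 0 < a := hpos a (by simp)
    have hls : l.sum ≤ k := by simp at hsum; omega
    have hj1 : 1 ≤ a + l.sum := by omega
    have hjk : a + l.sum ≤ k := by simpa using hsum
    have hposl : ∀ b ∈ l, 0 < b := fun b hb => hpos b (by simp [hb])
    have hi1 : ((idx k (a + l.sum) : Fin (k+1)) : ℕ) = k + 1 - (a + l.sum) :=
      idx_val k hj1 hjk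
    have hnotpos : eFun k l (idx k (a + l.sum)) = 0 := by
      refine eFun_not_pos k l hposl hls _ (fun t => ?_)
      intro h
      have hd : 0 < (l.drop (t : ℕ)).sum := drop_sum_pos l hposl t
      have hd2 : (l.drop (t : ℕ)).sum ≤ l.sum := drop_sum_le l (t : ℕ)
      have := idx_inj k hj1 hjk (by omega) (by omega) h
      omega
    simp only [rho, eFun, Perm.mul_apply]
    rcases eq_or_ne x 0 with rfl | hx0
    · rw [Equiv.swap_apply_left, ih hposl hls, hi1, if_neg (by omega), hnotpos]
      simp
      omega
    · have hv : (x : ℕ) ≠ 0 := fun h => hx0 (Fin.ext (by simpa using h))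
      rcases eq_or_ne x (idx k (a + l.sum)) with rfl | hxi
      · rw [Equiv.swap_apply_right, ih hposl hls, if_pos (by simp), if_neg hv, if_pos rfl, hi1]
        omega
      · rw [Equiv.swap_apply_of_ne_of_ne hx0 hxi, ih hposl hls, if_neg hv, if_neg hv,
          if_neg hxi]

lemma rho_zero_val (l : List ℕ) (hpos : ∀ b ∈ l, 0 < b) (hsum : l.sum ≤ k) :
    ((rho k l 0 : Fin (k+1)) : ℕ) = l.sum := by
  rw [rho_apply k l hpos hsum 0, if_pos (by simp)]

lemma rho_inj (l l' : List ℕ) (hpos : ∀ b ∈ l, 0 < b) (hsum : l.sum ≤ k)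
    (hpos' : ∀ b ∈ l', 0 < b) (hsum' : l'.sum ≤ k) (h : rho k l = rho k l') : l = l' := by
  induction l generalizing l' with
  | nil =>
    cases l' with
    | nil => rfl
    | cons a t =>
      exfalso
      have h0 := rho_zero_val k [] (by simp) (by simp)
      have h1 := rho_zero_val k (a :: t) hpos' hsum'
      rw [h] at h0
      have := hpos' a (by simp)
      rw [h0] at h1
      simp at h1
      omega
  | cons a t ih =>
    cases l' with
    | nil =>
      exfalso
      have h0 := rho_zero_val k [] (by simp) (by simp)
      have h1 := rho_zero_val k (a :: t) hpos hsum
      rw [← h] at h0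
      have := hpos a (by simp)
      rw [h0] at h1
      simp at h1
      omega
    | cons a' t' =>
      have hsums : (a :: t).sum = (a' :: t').sum := by
        have h0 := rho_zero_val k (a :: t) hpos hsum
        have h1 := rho_zero_val k (a' :: t') hpos' hsum'
        rw [h] at h0
        omega
      have hj : a + t.sum = a' + t'.sum := by simpa using hsums
      have ht : rho k t = rho k t' := by
        have e1 : rho k (a :: t) = rho k t * Equiv.swap 0 (idx k (a + t.sum)) := rfl
        have e2 : rho k (a' :: t') = rho k t' * Equiv.swap 0 (idx k (a' + t'.sum)) := rfl
        have := h
        rw [e1, e2, ← hj] at this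
        exact mul_right_cancel this
      have htt : t = t' :=
        ih t' (fun b hb => hpos b (by simp [hb]))
          (by simp only [List.sum_cons] at hsum; omega)
          (fun b hb => hpos' b (by simp [hb]))
          (by simp only [List.sum_cons] at hsum'; omega) ht
      subst htt
      have : a = a' := by omega
      rw [this]

lemma rho_surj : ∀ (j : ℕ) (ρ : Perm (Fin (k+1))),
    (∀ x : Fin (k+1), (x : ℕ) ≠ 0 → ((ρ x : Fin (k+1)) : ℕ) ≤ k + 1 - (x : ℕ)) →
    ((ρ 0 : Fin (k+1)) : ℕ) = j →
    ∃ l : List ℕ, (∀ b ∈ l, 0 < b) ∧ l.sum = j ∧ rho k l = ρ := by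
  intro j
  induction j using Nat.strong_induction_on with
  | _ j IH =>
  intro ρ hcon h0
  rcases Nat.eq_zero_or_pos j with rfl | hj
  · -- ρ = rho0
    refine ⟨[], by simp, by simp, ?_⟩
    have hsum_eq : ∀ x : Fin (k+1), ((ρ x : Fin (k+1)) : ℕ) = ((rho0 k x : Fin (k+1)) : ℕ) := by
      have hle : ∀ x : Fin (k+1), ((ρ x : Fin (k+1)) : ℕ) ≤ ((rho0 k x : Fin (k+1)) : ℕ) := by
        intro x
        rw [rho0_apply]
        rcases eq_or_ne ((x : Fin (k+1)) : ℕ) 0 with hx | hx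
        · have : x = 0 := Fin.ext (by simpa using hx)
          subst this
          simp [hx, h0]
        · rw [if_neg hx]
          exact hcon x hx
      have hsum : ∑ x : Fin (k+1), ((ρ x : Fin (k+1)) : ℕ)
          = ∑ x : Fin (k+1), ((rho0 k x : Fin (k+1)) : ℕ) := by
        rw [Equiv.sum_comp ρ (fun y => (y : ℕ)), Equiv.sum_comp (rho0 k) (fun y => (y : ℕ))]
      intro x
      exact (Finset.sum_eq_sum_iff_of_le (fun i _ => hle i)).mp hsum x (Finset.mem_univ x)
    show rho0 k = ρ
    ext x
    exact (hsum_eq x).symm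
  · have hjk : j ≤ k := by
      have := (ρ 0).isLt
      omega
    set i1 := idx k j with hi1def
    have hi1ne : i1 ≠ 0 := idx_ne_zero k hj hjk
    have hi1v : ((i1 : Fin (k+1)) : ℕ) = k + 1 - j := idx_val k hj hjk
    have hi1vne : ((i1 : Fin (k+1)) : ℕ) ≠ 0 := fun h => hi1ne (Fin.ext (by simpa using h))
    set ρ' := ρ * Equiv.swap 0 i1 with hρ'
    have hρ'0 : ρ' 0 = ρ i1 := by simp [hρ', Equiv.swap_apply_left]
    have hρ'i1 : ρ' i1 = ρ 0 := by simp [hρ', Equiv.swap_apply_right]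
    have hρ'x : ∀ x : Fin (k+1), x ≠ 0 → x ≠ i1 → ρ' x = ρ x := by
      intro x hx hxi
      simp [hρ', Equiv.swap_apply_of_ne_of_ne hx hxi]
    have hlt : ((ρ' 0 : Fin (k+1)) : ℕ) < j := by
      rw [hρ'0]
      have hle := hcon i1 hi1vne
      rw [hi1v] at hle
      have hne : ((ρ i1 : Fin (k+1)) : ℕ) ≠ j := by
        intro hcontra
        have : ρ i1 = ρ 0 := Fin.ext (by rw [hcontra, h0])
        exact hi1ne (ρ.injective this)
      omega
    have hcon' : ∀ x : Fin (k+1), (x : ℕ) ≠ 0 → ((ρ' x : Fin (k+1)) : ℕ) ≤ k + 1 - (x : ℕ) := by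
      intro x hx
      have hxne : x ≠ 0 := fun h => hx (by simp [h])
      rcases eq_or_ne x i1 with rfl | hxi
      · rw [hρ'i1, h0, hi1v]
        omega
      · rw [hρ'x x hxne hxi]
        exact hcon x hx
    obtain ⟨l', hpos', hsum', hrho'⟩ := IH _ hlt ρ' hcon' rfl
    refine ⟨(j - ((ρ' 0 : Fin (k+1)) : ℕ)) :: l', ?_, ?_, ?_⟩
    · intro b hb
      rcases List.mem_cons.mp hb with rfl | hb
      · omega
      · exact hpos' b hb
    · simp [hsum']
      omega
    · have hsum_cons : (j - ((ρ' 0 : Fin (k+1)) : ℕ)) + l'.sum = j := by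
        rw [hsum']; omega
      show rho k l' * Equiv.swap 0 (idx k _) = ρ
      rw [hsum_cons, hrho', ← hi1def, hρ']
      rw [mul_assoc]
      simp

end PermLayer

section Vandermonde
variable (m : ℕ)
lemma prod_pairs {M : Type*} [CommMonoid M] (f : Fin m → Fin m → M) :
    ∏ p ∈ Finset.univ.filter (fun p : Fin m × Fin m => p.1 < p.2), f p.1 p.2
      = ∏ i : Fin m, ∏ j ∈ Finset.Ioi i, f i j := by
  rw [Finset.prod_sigma']
  refine Finset.prod_nbij' (fun (p : Fin m × Fin m) => (⟨p.1, p.2⟩ : (_ : Fin m) × Fin m))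
    (fun x => (x.1, x.2)) ?_ ?_ ?_ ?_ ?_ <;>
    simp [Finset.mem_sigma, Finset.mem_Ioi]

lemma vandermonde_expand :
    (∏ p ∈ Finset.univ.filter (fun p : Fin m × Fin m => p.1 < p.2),
        (X p.1 - X p.2) : MvPolynomial (Fin m) ℤ)
      = ∑ τ : Perm (Fin m),
          (Perm.sign (Fin.revPerm : Perm (Fin m)) * Perm.sign τ : ℤˣ) •
            ∏ i : Fin m, (X (τ i) : MvPolynomial (Fin m) ℤ) ^ (i : ℕ) := by
  have hrev : (∏ p ∈ Finset.univ.filter (fun p : Fin m × Fin m => p.1 < p.2),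
      (X p.1 - X p.2) : MvPolynomial (Fin m) ℤ)
      = ∏ p ∈ Finset.univ.filter (fun p : Fin m × Fin m => p.1 < p.2),
          ((X (Fin.rev p.2) - X (Fin.rev p.1)) : MvPolynomial (Fin m) ℤ) := by
    refine Finset.prod_nbij' (fun p => (Fin.rev p.2, Fin.rev p.1))
      (fun p => (Fin.rev p.2, Fin.rev p.1)) ?_ ?_ ?_ ?_ ?_ <;>
      simp [Fin.rev_lt_rev, Fin.rev_rev]
  rw [hrev, prod_pairs m (fun i j => (X (Fin.rev j) - X (Fin.rev i) : MvPolynomial (Fin m) ℤ))]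
  rw [← Matrix.det_vandermonde (fun i : Fin m => (X (Fin.rev i) : MvPolynomial (Fin m) ℤ))]
  rw [Matrix.det_apply]
  rw [← Equiv.sum_comp (Equiv.mulLeft (Fin.revPerm : Perm (Fin m)))
    (fun σ : Perm (Fin m) => Perm.sign σ • ∏ i : Fin m,
      Matrix.vandermonde (fun i : Fin m => (X (Fin.rev i) : MvPolynomial (Fin m) ℤ)) (σ i) i)]
  refine Finset.sum_congr rfl (fun τ _ => ?_)
  have h1 : Perm.sign ((Equiv.mulLeft (Fin.revPerm : Perm (Fin m))) τ)
      = Perm.sign (Fin.revPerm : Perm (Fin m)) * Perm.sign τ := by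
    simp [Equiv.mulLeft]
  rw [h1]
  congr 1
  refine Finset.prod_congr rfl (fun i _ => ?_)
  simp [Matrix.vandermonde, Fin.rev_rev, Equiv.mulLeft]

lemma prod_X_pow_stair (τ : Perm (Fin m)) :
    (∏ i : Fin m, (X (τ i) : MvPolynomial (Fin m) ℤ) ^ (i : ℕ))
      = monomial (Finsupp.equivFunOnFinite.symm fun x : Fin m => ((τ.symm x : Fin m) : ℕ)) 1 := by
  have h1 : ∀ i : Fin m, (X (τ i) : MvPolynomial (Fin m) ℤ) ^ (i : ℕ)
      = X (τ i) ^ ((τ.symm (τ i) : Fin m) : ℕ) := by simp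
  rw [Finset.prod_congr rfl (fun i _ => h1 i),
    Equiv.prod_comp τ (fun x => (X x : MvPolynomial (Fin m) ℤ) ^ ((τ.symm x : Fin m) : ℕ)),
    monomial_eq, Finsupp.prod_fintype]
  · simp
  · intro i; rfl

end Vandermonde

section WtLayer
variable {n : ℕ} (w : Equiv.Perm (Fin n)) (k : ℕ)

/-- the weight finsupp of an assignment of cycles to variables -/
noncomputable def wt (g : {c // c ∈ cyclesOf w} → Fin (k+1)) : Fin (k+1) →₀ ℕ :=
  ∑ c : {c // c ∈ cyclesOf w}, Finsupp.single (g c) (c.1.card)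

lemma wt_apply (g : {c // c ∈ cyclesOf w} → Fin (k+1)) (x : Fin (k+1)) :
    wt w k g x = ∑ c ∈ Finset.univ.filter (fun c : {c // c ∈ cyclesOf w} => g c = x),
      c.1.card := by
  rw [wt, Finsupp.finset_sum_apply, Finset.sum_filter]
  refine Finset.sum_congr rfl (fun c _ => ?_)
  rw [Finsupp.single_apply]

lemma wt_total (g : {c // c ∈ cyclesOf w} → Fin (k+1)) :
    ∑ x : Fin (k+1), wt w k g x = n := by
  have h1 : ∑ x : Fin (k+1), wt w k g x = ∑ c : {c // c ∈ cyclesOf w}, c.1.card := by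
    simp only [wt, Finsupp.finset_sum_apply]
    rw [Finset.sum_comm]
    refine Finset.sum_congr rfl (fun c _ => ?_)
    simp [Finsupp.single_apply]
  rw [h1, Finset.sum_coe_sort (cyclesOf w) Finset.card]
  exact cycles_sum_card w

end WtLayer

/-- positions of the parts of a block list -/
def posIdx (k : ℕ) (B : List ℕ) (t : Fin B.length) : Fin (k+1) := idx k ((B.drop (t : ℕ)).sum)

/-- the exponent finsupp attached to a block list -/
noncomputable def eB (n k : ℕ) (B : List ℕ) : Fin (k+1) →₀ ℕ :=
  Finsupp.equivFunOnFinite.symm fun x => if (x : ℕ) = 0 then n - B.sum else eFun k B x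

lemma eB_apply (n k : ℕ) (B : List ℕ) (x : Fin (k+1)) :
    eB n k B x = if (x : ℕ) = 0 then n - B.sum else eFun k B x := rfl

section PosLemmas
variable (k : ℕ) (B : List ℕ)

lemma drop_sum_lt (hpos : ∀ b ∈ B, 0 < b) {t t' : ℕ} (ht' : t' < B.length) (h : t < t') :
    (B.drop t').sum < (B.drop t).sum := by
  have ht : t < B.length := lt_trans h ht'
  have h1 : B.drop t = B[t] :: B.drop (t+1) := List.drop_eq_getElem_cons ht
  have h2 : (B.drop t').sum ≤ (B.drop (t+1)).sum := by
    have : B.drop t' = (B.drop (t+1)).drop (t' - (t+1)) := by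
      rw [List.drop_drop]
      congr 1
      omega
    rw [this]
    exact drop_sum_le _ _
  have h3 : 0 < B[t] := hpos _ (List.getElem_mem ht)
  rw [h1, List.sum_cons]
  omega

variable (hpos : ∀ b ∈ B, 0 < b) (hsum : B.sum ≤ k)
include hpos hsum

lemma posIdx_bounds (t : Fin B.length) :
    1 ≤ (B.drop (t : ℕ)).sum ∧ (B.drop (t : ℕ)).sum ≤ k :=
  ⟨drop_sum_pos B hpos t, le_trans (drop_sum_le B _) hsum⟩

lemma posIdx_ne_zero (t : Fin B.length) : posIdx k B t ≠ 0 := by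
  obtain ⟨h1, h2⟩ := posIdx_bounds k B hpos hsum t
  exact idx_ne_zero k h1 h2

lemma posIdx_inj {t t' : Fin B.length} (h : posIdx k B t = posIdx k B t') : t = t' := by
  obtain ⟨h1, h2⟩ := posIdx_bounds k B hpos hsum t
  obtain ⟨h1', h2'⟩ := posIdx_bounds k B hpos hsum t'
  have hss := idx_inj k h1 h2 h1' h2' h
  by_contra hne
  rcases Nat.lt_or_ge (t : ℕ) (t' : ℕ) with hlt | hge
  · have := drop_sum_lt B hpos t'.isLt hlt
    omega
  · have hlt' : (t' : ℕ) < (t : ℕ) := by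
      rcases Nat.eq_or_lt_of_le hge with heq | hlt'
      · exact absurd (Fin.ext heq.symm) hne
      · exact hlt'
    have := drop_sum_lt B hpos t.isLt hlt'
    omega

lemma eFun_posIdx (t : Fin B.length) : eFun k B (posIdx k B t) = B.get t := by
  induction B with
  | nil => exact absurd t.isLt (by simp)
  | cons a l ih =>
    have ha : 0 < a := hpos a (by simp)
    have hposl : ∀ b ∈ l, 0 < b := fun b hb => hpos b (by simp [hb])
    have hsuml : l.sum ≤ k := by simp only [List.sum_cons] at hsum; omega
    have hj1 : 1 ≤ a + l.sum := by omega
    have hjk : a + l.sum ≤ k := by simpa using hsum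
    rcases t with ⟨tv, htv⟩
    cases tv with
    | zero =>
      have : posIdx k (a :: l) ⟨0, htv⟩ = idx k (a + l.sum) := by
        simp [posIdx]
      rw [this]
      simp [eFun]
    | succ s =>
      have hsl : s < l.length := by simpa using htv
      have hp : posIdx k (a :: l) ⟨s+1, htv⟩ = posIdx k l ⟨s, hsl⟩ := by
        simp [posIdx]
      rw [hp]
      have hne : posIdx k l ⟨s, hsl⟩ ≠ idx k (a + l.sum) := by
        intro h
        have h1 : 1 ≤ (l.drop s).sum := drop_sum_pos l hposl ⟨s, hsl⟩
        have h2 : (l.drop s).sum ≤ l.sum := drop_sum_le l s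
        have := idx_inj k h1 (by omega) hj1 hjk h
        omega
      show eFun k (a :: l) (posIdx k l ⟨s, hsl⟩) = _
      rw [eFun, if_neg hne, ih hposl hsuml ⟨s, hsl⟩]
      rfl

lemma eFun_sum : ∑ x : Fin (k+1), eFun k B x = B.sum := by
  induction B with
  | nil => simp [eFun]
  | cons a l ih =>
    have ha : 0 < a := hpos a (by simp)
    have hposl : ∀ b ∈ l, 0 < b := fun b hb => hpos b (by simp [hb])
    have hsuml : l.sum ≤ k := by simp only [List.sum_cons] at hsum; omega
    have hj1 : 1 ≤ a + l.sum := by omega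
    have hjk : a + l.sum ≤ k := by simpa using hsum
    set i1 := idx k (a + l.sum) with hi1
    have hl_i1 : eFun k l i1 = 0 := by
      refine eFun_not_pos k l hposl hsuml _ (fun t => ?_)
      intro h
      have hd : 0 < (l.drop (t : ℕ)).sum := drop_sum_pos l hposl t
      have hd2 : (l.drop (t : ℕ)).sum ≤ l.sum := drop_sum_le l (t : ℕ)
      have := idx_inj k hj1 hjk (by omega) (by omega) h
      omega
    have e1 : ∑ x : Fin (k+1), eFun k (a :: l) x
        = eFun k (a :: l) i1 + ∑ x ∈ Finset.univ.erase i1, eFun k (a :: l) x :=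
      (Finset.add_sum_erase _ _ (Finset.mem_univ i1)).symm
    have e2 : ∑ x ∈ Finset.univ.erase i1, eFun k (a :: l) x
        = ∑ x ∈ Finset.univ.erase i1, eFun k l x := by
      refine Finset.sum_congr rfl (fun x hx => ?_)
      have := Finset.ne_of_mem_erase hx
      rw [eFun, if_neg this]
    have e3 : ∑ x ∈ Finset.univ.erase i1, eFun k l x = ∑ x : Fin (k+1), eFun k l x := by
      rw [← Finset.add_sum_erase _ _ (Finset.mem_univ i1), hl_i1, zero_add]
    have e4 : eFun k (a :: l) i1 = a := by rw [eFun, if_pos rfl]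
    rw [e1, e2, e3, e4, ih hposl hsuml]
    simp

end PosLemmas

section Count
variable {n : ℕ}

lemma card_cycle_pos (w : Equiv.Perm (Fin n)) (c : {c // c ∈ cyclesOf w}) : 0 < c.1.card :=
  Finset.card_pos.mpr (cycles_nonempty w c.2)

/-- the assignment attached to a tiling -/
noncomputable def toG (w : Equiv.Perm (Fin n)) (k : ℕ) (B : List ℕ)
    (L : Fin B.length → Finset (Finset (Fin n))) (c : {c // c ∈ cyclesOf w}) : Fin (k+1) :=
  if h : ∃ t, c.1 ∈ L t then posIdx k B h.choose else 0

/-- the tiling attached to an assignment -/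
noncomputable def toL (w : Equiv.Perm (Fin n)) (k : ℕ) (B : List ℕ)
    (g : {c // c ∈ cyclesOf w} → Fin (k+1)) (t : Fin B.length) : Finset (Finset (Fin n)) :=
  Finset.image Subtype.val (Finset.univ.filter fun c => g c = posIdx k B t)

variable {w : Equiv.Perm (Fin n)} {k : ℕ} {B : List ℕ}

lemma mem_toL {g : {c // c ∈ cyclesOf w} → Fin (k+1)} {t : Fin B.length}
    {s : Finset (Fin n)} :
    s ∈ toL w k B g t ↔ ∃ hc : s ∈ cyclesOf w, g ⟨s, hc⟩ = posIdx k B t := by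
  constructor
  · intro hs
    obtain ⟨c, hc, rfl⟩ := Finset.mem_image.mp hs
    exact ⟨c.2, by simpa using (Finset.mem_filter.mp hc).2⟩
  · rintro ⟨hc, hg⟩
    exact Finset.mem_image.mpr ⟨⟨s, hc⟩, Finset.mem_filter.mpr ⟨Finset.mem_univ _, hg⟩, rfl⟩

lemma sum_toL (g : {c // c ∈ cyclesOf w} → Fin (k+1)) (t : Fin B.length) :
    (toL w k B g t).sum Finset.card = wt w k g (posIdx k B t) := by
  rw [toL, Finset.sum_image (by intro c _ c' _ h; exact Subtype.ext h), wt_apply]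

variable (hpos : ∀ b ∈ B, 0 < b) (hsum : B.sum ≤ k)
include hpos hsum

lemma posIdx_val_ne_zero (t : Fin B.length) : ((posIdx k B t : Fin (k+1)) : ℕ) ≠ 0 := by
  intro h
  exact posIdx_ne_zero k B hpos hsum t (Fin.ext (by simpa using h))

lemma toG_eq_of_mem {L : Fin B.length → Finset (Finset (Fin n))}
    (hdisj : ∀ i j, i ≠ j → Disjoint (L i) (L j))
    {c : {c // c ∈ cyclesOf w}} {t : Fin B.length} (hc : c.1 ∈ L t) :
    toG w k B L c = posIdx k B t := by
  have h : ∃ t, c.1 ∈ L t := ⟨t, hc⟩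
  rw [toG, dif_pos h]
  congr 1
  by_contra hne
  exact (Finset.disjoint_left.mp (hdisj _ _ hne) h.choose_spec) hc

lemma toL_toG {L : Fin B.length → Finset (Finset (Fin n))}
    (hmem : ∀ i, ∀ c ∈ L i, c ∈ cyclesOf w)
    (hdisj : ∀ i j, i ≠ j → Disjoint (L i) (L j)) (t : Fin B.length) :
    toL w k B (toG w k B L) t = L t := by
  ext s
  rw [mem_toL]
  constructor
  · rintro ⟨hc, hg⟩
    by_cases h : ∃ t', (⟨s, hc⟩ : {c // c ∈ cyclesOf w}).1 ∈ L t'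
    · obtain ⟨t', ht'⟩ := h
      rw [toG_eq_of_mem hpos hsum hdisj ht'] at hg
      rwa [← posIdx_inj k B hpos hsum hg]
    · rw [toG, dif_neg h] at hg
      exact absurd hg.symm (posIdx_ne_zero k B hpos hsum t)
  · intro hs
    exact ⟨hmem t s hs, toG_eq_of_mem hpos hsum hdisj hs⟩

lemma wt_toG {L : Fin B.length → Finset (Finset (Fin n))}
    (hmem : ∀ i, ∀ c ∈ L i, c ∈ cyclesOf w)
    (hdisj : ∀ i j, i ≠ j → Disjoint (L i) (L j))
    (hsums : ∀ i, (L i).sum Finset.card = B.get i) :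
    wt w k (toG w k B L) = eB n k B := by
  have hpos_t : ∀ t : Fin B.length, wt w k (toG w k B L) (posIdx k B t) = B.get t := by
    intro t
    rw [← sum_toL, toL_toG hpos hsum hmem hdisj, hsums]
  have hother : ∀ x : Fin (k+1), x ≠ 0 → (∀ t : Fin B.length, x ≠ posIdx k B t) →
      wt w k (toG w k B L) x = 0 := by
    intro x hx0 hxt
    rw [wt_apply]
    refine Finset.sum_eq_zero (fun c hc => ?_)
    exfalso
    have hg := (Finset.mem_filter.mp hc).2
    by_cases h : ∃ t', c.1 ∈ L t'
    · obtain ⟨t', ht'⟩ := h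
      rw [toG_eq_of_mem hpos hsum hdisj ht'] at hg
      exact hxt t' hg.symm
    · rw [toG, dif_neg h] at hg
      exact hx0 hg.symm
  have hne : ∀ x : Fin (k+1), (x : ℕ) ≠ 0 → wt w k (toG w k B L) x = eFun k B x := by
    intro x hx
    have hx0 : x ≠ 0 := fun h => hx (by simp [h])
    by_cases h : ∃ t : Fin B.length, x = posIdx k B t
    · obtain ⟨t, rfl⟩ := h
      rw [hpos_t t, eFun_posIdx k B hpos hsum t]
    · push_neg at h
      rw [hother x hx0 h]
      refine (eFun_not_pos k B hpos hsum x (fun t => h t)).symm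
  have heFun0 : eFun k B 0 = 0 := by
    refine eFun_not_pos k B hpos hsum 0 (fun t => ?_)
    exact (posIdx_ne_zero k B hpos hsum t).symm
  have htot := wt_total w k (toG w k B L)
  have hzero : wt w k (toG w k B L) 0 = n - B.sum := by
    have h1 : ∑ x : Fin (k+1), wt w k (toG w k B L) x
        = wt w k (toG w k B L) 0 + ∑ x ∈ Finset.univ.erase 0, wt w k (toG w k B L) x :=
      (Finset.add_sum_erase _ _ (Finset.mem_univ 0)).symm
    have h2 : ∑ x ∈ Finset.univ.erase 0, wt w k (toG w k B L) x
        = ∑ x ∈ Finset.univ.erase 0, eFun k B x := by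
      refine Finset.sum_congr rfl (fun x hx => ?_)
      have hxne := Finset.ne_of_mem_erase hx
      exact hne x (fun h => hxne (Fin.ext (by simpa using h)))
    have h3 : ∑ x ∈ Finset.univ.erase 0, eFun k B x = B.sum := by
      have h4 := (Finset.add_sum_erase _ (eFun k B) (Finset.mem_univ 0)).symm
      rw [eFun_sum k B hpos hsum, heFun0, zero_add] at h4
      omega
    rw [h1, h2, h3] at htot
    omega
  ext x
  rw [eB_apply]
  rcases eq_or_ne ((x : Fin (k+1)) : ℕ) 0 with hx | hx
  · have hx' : x = 0 := Fin.ext (by simpa using hx)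
    subst hx'
    rw [if_pos hx, hzero]
  · rw [if_neg hx, hne x hx]

lemma wt_g_mem {g : {c // c ∈ cyclesOf w} → Fin (k+1)} (hg : wt w k g = eB n k B)
    (c : {c // c ∈ cyclesOf w}) : g c = 0 ∨ ∃ t : Fin B.length, g c = posIdx k B t := by
  by_contra hcon
  push_neg at hcon
  obtain ⟨h0, ht⟩ := hcon
  have hle : c.1.card ≤ wt w k g (g c) := by
    rw [wt_apply]
    exact Finset.single_le_sum (f := fun c' : {c // c ∈ cyclesOf w} => c'.1.card)
      (fun c' _ => Nat.zero_le _) (Finset.mem_filter.mpr ⟨Finset.mem_univ _, rfl⟩)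
  have hval : ((g c : Fin (k+1)) : ℕ) ≠ 0 := fun h => h0 (Fin.ext (by simpa using h))
  rw [hg, eB_apply, if_neg hval, eFun_not_pos k B hpos hsum _ (fun t => ht t)] at hle
  have := card_cycle_pos w c
  omega

lemma disj_toL {g : {c // c ∈ cyclesOf w} → Fin (k+1)} :
    ∀ i j, i ≠ j → Disjoint (toL w k B g i) (toL w k B g j) := by
  intro i j hij
  rw [Finset.disjoint_left]
  intro s hsi hsj
  obtain ⟨hc, hgi⟩ := mem_toL.mp hsi
  obtain ⟨hc', hgj⟩ := mem_toL.mp hsj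
  rw [hgi] at hgj
  exact hij (posIdx_inj k B hpos hsum hgj)

lemma toG_toL {g : {c // c ∈ cyclesOf w} → Fin (k+1)} (hg : wt w k g = eB n k B) :
    toG w k B (toL w k B g) = g := by
  funext c
  rcases wt_g_mem hpos hsum hg c with h0 | ⟨t, ht⟩
  · rw [toG, dif_neg, h0]
    rintro ⟨t', ht'⟩
    obtain ⟨hc, hgt⟩ := mem_toL.mp ht'
    have hcc : (⟨c.1, hc⟩ : {c // c ∈ cyclesOf w}) = c := Subtype.ext rfl
    rw [hcc] at hgt
    exact posIdx_ne_zero k B hpos hsum t' (by rw [← hgt, h0])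
  · have hmem : c.1 ∈ toL w k B g t := mem_toL.mpr ⟨c.2, by rwa [Subtype.coe_eta]⟩
    rw [toG_eq_of_mem hpos hsum (disj_toL hpos hsum) hmem, ht]

lemma count_eq_zeta :
    (Finset.univ.filter
      (fun g : {c // c ∈ cyclesOf w} → Fin (k+1) => wt w k g = eB n k B)).card
      = zeta w B := by
  have e : {g : {c // c ∈ cyclesOf w} → Fin (k+1) // wt w k g = eB n k B} ≃
      {L : Fin B.length → Finset (Finset (Fin n)) //
        (∀ i, ∀ c ∈ L i, c ∈ cyclesOf w) ∧
        (∀ i j, i ≠ j → Disjoint (L i) (L j)) ∧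
        ∀ i, (L i).sum Finset.card = B.get i} := by
    refine ⟨fun g => ⟨toL w k B g.1, ?_, disj_toL hpos hsum, ?_⟩,
      fun L => ⟨toG w k B L.1, wt_toG hpos hsum L.2.1 L.2.2.1 L.2.2.2⟩, ?_, ?_⟩
    · intro i c hc
      obtain ⟨h, -⟩ := mem_toL.mp hc
      exact h
    · intro t
      rw [sum_toL, g.2, eB_apply,
        if_neg (posIdx_val_ne_zero hpos hsum t), eFun_posIdx k B hpos hsum t]
    · intro g
      exact Subtype.ext (toG_toL hpos hsum g.2)
    · intro L
      exact Subtype.ext (funext (fun t => toL_toG hpos hsum L.2.1 L.2.2.1 t))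
  rw [zeta, ← Nat.card_congr e, Nat.card_eq_fintype_card, Fintype.card_subtype]
end Count

section Final

lemma prod_monomial_one {α σ : Type*} [DecidableEq σ] (s : Finset α) (d : α → (σ →₀ ℕ)) :
    ∏ a ∈ s, (monomial (d a) (1 : ℤ) : MvPolynomial σ ℤ) = monomial (∑ a ∈ s, d a) 1 := by
  classical
  induction s using Finset.cons_induction with
  | empty => simp [monomial_zero']
  | cons a s ha ih =>
    rw [Finset.prod_cons, Finset.sum_cons, ih, monomial_mul, one_mul]

lemma coeff_P {n : ℕ} (w : Equiv.Perm (Fin n)) (k : ℕ) (e : Fin (k+1) →₀ ℕ) :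
    MvPolynomial.coeff e
        (∏ c ∈ cyclesOf w, ∑ i : Fin (k+1), (X i : MvPolynomial (Fin (k+1)) ℤ) ^ c.card)
      = ((Finset.univ.filter
          (fun g : {c // c ∈ cyclesOf w} → Fin (k+1) => wt w k g = e)).card : ℤ) := by
  classical
  rw [← Finset.prod_coe_sort (cyclesOf w)
    (fun c => ∑ i : Fin (k+1), (X i : MvPolynomial (Fin (k+1)) ℤ) ^ c.card)]
  rw [Fintype.prod_sum (fun (c : {c // c ∈ cyclesOf w}) (i : Fin (k+1)) =>
    (X i : MvPolynomial (Fin (k+1)) ℤ) ^ c.1.card)]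
  have hmono : ∀ g : {c // c ∈ cyclesOf w} → Fin (k+1),
      (∏ c : {c // c ∈ cyclesOf w}, (X (g c) : MvPolynomial (Fin (k+1)) ℤ) ^ c.1.card)
        = monomial (wt w k g) 1 := by
    intro g
    rw [wt, ← prod_monomial_one]
    exact Finset.prod_congr rfl (fun c _ => X_pow_eq_monomial)
  rw [Finset.sum_congr rfl (fun g _ => hmono g), coeff_sum]
  simp only [coeff_monomial]
  rw [Finset.sum_boole]

theorem master (n k : ℕ) (hnk : 2 * k ≤ n) (w : Equiv.Perm (Fin n)) (m : ℕ) (hm : m = k + 1)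
    (gl : Fin m → ℕ) (hgl : ∀ i : Fin m, gl i = if (i : ℕ) = 0 then n - k else 1) :
    MvPolynomial.coeff
      (Finsupp.equivFunOnFinite.symm fun i : Fin m => gl i + (m - 1 - (i : ℕ)))
      ((∏ p ∈ Finset.univ.filter (fun p : Fin m × Fin m => p.1 < p.2),
          (MvPolynomial.X p.1 - MvPolynomial.X p.2)) *
        ∏ c ∈ cyclesOf w, ∑ i : Fin m,
          (MvPolynomial.X i : MvPolynomial (Fin m) ℤ) ^ c.card)
      = (-1 : ℤ) ^ k *
          ∑ j ∈ Finset.range (k + 1),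
            ∑ μ : Composition j, (-1 : ℤ) ^ μ.length * zeta w μ.blocks := by
  classical
  subst hm
  have hkn : k ≤ n := by omega
  set P : MvPolynomial (Fin (k+1)) ℤ :=
    ∏ c ∈ cyclesOf w, ∑ i : Fin (k+1), (X i : MvPolynomial (Fin (k+1)) ℤ) ^ c.card with hP
  set tgt : Fin (k+1) →₀ ℕ := Finsupp.equivFunOnFinite.symm
    (fun i : Fin (k+1) => if (i : ℕ) = 0 then n else k + 1 - (i : ℕ)) with htgtdef
  have htgt_apply : ∀ x : Fin (k+1), tgt x = if (x : ℕ) = 0 then n else k + 1 - (x : ℕ) :=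
    fun x => rfl
  have htgt : (Finsupp.equivFunOnFinite.symm
      fun i : Fin (k+1) => gl i + (k + 1 - 1 - (i : ℕ))) = tgt := by
    rw [htgtdef]
    congr 1
    funext i
    rw [hgl i]
    rcases eq_or_ne ((i : Fin (k+1)) : ℕ) 0 with h | h
    · rw [if_pos h, if_pos h]; omega
    · rw [if_neg h, if_neg h]; have := i.isLt; omega
  rw [htgt, vandermonde_expand (k+1), Finset.sum_mul, coeff_sum]
  have hterm : ∀ τ : Perm (Fin (k+1)),
      MvPolynomial.coeff tgt
        (((Perm.sign (Fin.revPerm : Perm (Fin (k+1))) * Perm.sign τ : ℤˣ) •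
          ∏ i : Fin (k+1), (X (τ i) : MvPolynomial (Fin (k+1)) ℤ) ^ (i : ℕ)) * P)
      = ((Perm.sign (Fin.revPerm : Perm (Fin (k+1))) * Perm.sign τ : ℤˣ) : ℤ) *
          (if (Finsupp.equivFunOnFinite.symm fun x : Fin (k+1) => ((τ.symm x : Fin (k+1)) : ℕ))
              ≤ tgt
            then MvPolynomial.coeff
              (tgt - Finsupp.equivFunOnFinite.symm
                fun x : Fin (k+1) => ((τ.symm x : Fin (k+1)) : ℕ)) P
            else 0) := by
    intro τ
    rw [smul_mul_assoc, coeff_smul, prod_X_pow_stair (k+1) τ, coeff_monomial_mul']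
    rw [Units.smul_def, smul_eq_mul]
    split_ifs with h
    · rw [one_mul]
    · rw [mul_zero]
  rw [Finset.sum_congr rfl (fun τ _ => hterm τ)]
  -- restrict to permutations satisfying the staircase bound
  rw [← Finset.sum_subset
    (Finset.filter_subset
      (fun τ : Perm (Fin (k+1)) =>
        (Finsupp.equivFunOnFinite.symm fun x : Fin (k+1) => ((τ.symm x : Fin (k+1)) : ℕ)) ≤ tgt)
      Finset.univ)
    (by
      intro τ _ hτ
      rw [Finset.mem_filter] at hτ
      push_neg at hτ
      rw [if_neg (hτ (Finset.mem_univ τ)), mul_zero])]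
  -- rewrite the right-hand side as a sum over a sigma type
  rw [Finset.mul_sum]
  have hrhs : ∀ j ∈ Finset.range (k+1),
      (-1 : ℤ) ^ k * ∑ μ : Composition j, (-1 : ℤ) ^ μ.length * zeta w μ.blocks
        = ∑ μ : Composition j, (-1 : ℤ) ^ k * ((-1 : ℤ) ^ μ.length * zeta w μ.blocks) :=
    fun j _ => Finset.mul_sum _ _ _
  rw [Finset.sum_congr rfl hrhs, Finset.sum_sigma']
  -- the bijection
  refine (Finset.sum_bij
    (i := fun (p : Σ j : ℕ, Composition j) (_ : p ∈ (Finset.range (k+1)).sigma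
      (fun j => (Finset.univ : Finset (Composition j)))) => (rho k p.2.blocks)⁻¹)
    ?_ ?_ ?_ ?_).symm
  · -- maps into the filter
    rintro ⟨j, μ⟩ hp
    dsimp only
    have hj : j < k + 1 := Finset.mem_range.mp (Finset.mem_sigma.mp hp).1
    have hposB : ∀ b ∈ μ.blocks, 0 < b := fun b hb => μ.blocks_pos hb
    have hsumB : μ.blocks.sum ≤ k := by rw [μ.blocks_sum]; omega
    rw [Finset.mem_filter]
    refine ⟨Finset.mem_univ _, ?_⟩
    rw [Finsupp.le_def]
    intro x
    have hx : ((Finsupp.equivFunOnFinite.symm fun x : Fin (k+1) =>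
        ((((rho k μ.blocks)⁻¹).symm x : Fin (k+1)) : ℕ)) x) = ((rho k μ.blocks x : Fin (k+1)) : ℕ) := by
      simp [Finsupp.equivFunOnFinite, Equiv.Perm.inv_def]
    rw [hx, htgt_apply, rho_apply k μ.blocks hposB hsumB]
    split_ifs with h
    · rw [μ.blocks_sum]; omega
    · omega
  · -- injective
    rintro ⟨j, μ⟩ hp ⟨j', μ'⟩ hp' h
    have hposB : ∀ b ∈ μ.blocks, 0 < b := fun b hb => μ.blocks_pos hb
    have hsumB : μ.blocks.sum ≤ k := by
      have hj2 : j < k + 1 := Finset.mem_range.mp (Finset.mem_sigma.mp hp).1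
      rw [μ.blocks_sum]; omega
    have hposB' : ∀ b ∈ μ'.blocks, 0 < b := fun b hb => μ'.blocks_pos hb
    have hsumB' : μ'.blocks.sum ≤ k := by
      have hj2 : j' < k + 1 := Finset.mem_range.mp (Finset.mem_sigma.mp hp').1
      rw [μ'.blocks_sum]; omega
    have hrho : rho k μ.blocks = rho k μ'.blocks := inv_injective h
    have hblocks : μ.blocks = μ'.blocks := rho_inj k _ _ hposB hsumB hposB' hsumB' hrho
    have hjj : j = j' := by rw [← μ.blocks_sum, ← μ'.blocks_sum, hblocks]
    subst hjj
    have : μ = μ' := by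
      ext1
      rw [hblocks]
    rw [this]
  · -- surjective
    intro τ hτ
    rw [Finset.mem_filter] at hτ
    have hcon : ∀ x : Fin (k+1), (x : ℕ) ≠ 0 → ((τ⁻¹ x : Fin (k+1)) : ℕ) ≤ k + 1 - (x : ℕ) := by
      intro x hx
      have := (Finsupp.le_def.mp hτ.2) x
      have hv : ((Finsupp.equivFunOnFinite.symm fun x : Fin (k+1) =>
          ((τ.symm x : Fin (k+1)) : ℕ)) x) = ((τ⁻¹ x : Fin (k+1)) : ℕ) := by
        simp [Finsupp.equivFunOnFinite, Equiv.Perm.inv_def]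
      rw [hv, htgt_apply, if_neg hx] at this
      exact this
    obtain ⟨l, hlpos, hlsum, hlrho⟩ := rho_surj k ((τ⁻¹ 0 : Fin (k+1)) : ℕ) τ⁻¹ hcon rfl
    refine ⟨⟨l.sum, ⟨l, fun {b} hb => hlpos b hb, rfl⟩⟩, ?_, ?_⟩
    · rw [Finset.mem_sigma]
      refine ⟨Finset.mem_range.mpr ?_, Finset.mem_univ _⟩
      show l.sum < k + 1
      rw [hlsum]
      exact (τ⁻¹ 0).isLt
    · show (rho k l)⁻¹ = τ
      rw [hlrho, inv_inv]
  · -- terms agree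
    rintro ⟨j, μ⟩ hp
    dsimp only
    have hj : j < k + 1 := Finset.mem_range.mp (Finset.mem_sigma.mp hp).1
    have hposB : ∀ b ∈ μ.blocks, 0 < b := fun b hb => μ.blocks_pos hb
    have hsumB : μ.blocks.sum ≤ k := by rw [μ.blocks_sum]; omega
    have hstair : ∀ x : Fin (k+1),
        ((Finsupp.equivFunOnFinite.symm fun x : Fin (k+1) =>
          ((((rho k μ.blocks)⁻¹).symm x : Fin (k+1)) : ℕ)) x)
          = ((rho k μ.blocks x : Fin (k+1)) : ℕ) := by
      intro x
      simp [Finsupp.equivFunOnFinite, Equiv.Perm.inv_def]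
    have hle : (Finsupp.equivFunOnFinite.symm fun x : Fin (k+1) =>
        ((((rho k μ.blocks)⁻¹).symm x : Fin (k+1)) : ℕ)) ≤ tgt := by
      rw [Finsupp.le_def]
      intro x
      rw [hstair, htgt_apply, rho_apply k μ.blocks hposB hsumB]
      split_ifs with h
      · rw [μ.blocks_sum]; omega
      · omega
    have hsub : tgt - (Finsupp.equivFunOnFinite.symm fun x : Fin (k+1) =>
        ((((rho k μ.blocks)⁻¹).symm x : Fin (k+1)) : ℕ)) = eB n k μ.blocks := by
      ext x
      rw [Finsupp.tsub_apply, hstair, htgt_apply, rho_apply k μ.blocks hposB hsumB, eB_apply]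
      have heflt := eFun_le k μ.blocks hsumB x
      split_ifs with h
      · rfl
      · have := x.isLt
        omega
    have hcount : MvPolynomial.coeff (eB n k μ.blocks) P = (zeta w μ.blocks : ℤ) := by
      rw [hP, coeff_P w k, count_eq_zeta hposB hsumB]
    have hsign : ((Perm.sign (Fin.revPerm : Perm (Fin (k+1)))
          * Perm.sign ((rho k μ.blocks)⁻¹) : ℤˣ) : ℤ)
        = (-1 : ℤ) ^ k * (-1 : ℤ) ^ μ.blocks.length := by
      rw [Equiv.Perm.sign_inv, sign_rho k μ.blocks hposB hsumB]
      push_cast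
      set r : ℤ := ((Perm.sign (Fin.revPerm : Perm (Fin (k+1))) : ℤˣ) : ℤ) with hr
      have hrr : r * r = 1 := by
        rw [hr, ← Units.val_mul, Int.units_mul_self, Units.val_one]
      calc r * ((-1 : ℤ) ^ μ.blocks.length * ((-1 : ℤ) ^ k * r))
          = ((-1 : ℤ) ^ k * (-1 : ℤ) ^ μ.blocks.length) * (r * r) := by ring
        _ = (-1 : ℤ) ^ k * (-1 : ℤ) ^ μ.blocks.length := by rw [hrr, mul_one]
    rw [if_pos hle, hsub, hcount, hsign]
    rw [Composition.blocks_length]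
    ring

end Final

theorem stmt12 (n k : ℕ) (hnk : 2 * k ≤ n) (w : Equiv.Perm (Fin n)) :
    chiFrob w ((n - k) :: List.replicate k 1) =
      (-1 : ℤ) ^ k *
        ∑ j ∈ Finset.range (k + 1),
          ∑ μ : Composition j, (-1 : ℤ) ^ μ.length * zeta w μ.blocks := by
  have hm : ((n - k) :: List.replicate k 1).length = k + 1 := by simp
  have hgl : ∀ i : Fin (((n - k) :: List.replicate k 1).length),
      ((n - k) :: List.replicate k 1).get i = if (i : ℕ) = 0 then n - k else 1 := by
    intro i
    rcases i with ⟨iv, hiv⟩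
    cases iv with
    | zero => rfl
    | succ s =>
      have hs : s < k := by simpa using hiv
      simp [List.get_eq_getElem, List.getElem_cons_succ, List.getElem_replicate]
  rw [chiFrob]
  exact master n k hnk w _ hm _ hgl
end

section
/- Let k ≥ 1 and n ≥ 2k. Then for every w ∈ 𝔖_n, the two-row irreducible character satisfies χ^{(n−k, k)}(w) = Σ_{μ ⊢ k} η^μ(w) − Σ_{μ ⊢ k−1} η^μ(w), where the sums are over all partitions of k and of k−1 respectively. -/
open scoped Classical

open Finset in
lemma mem_cyclesOf_self {n : ℕ} (w : Equiv.Perm (Fin n)) (x : Fin n) :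
    (Finset.univ.filter fun y => w.SameCycle x y) ∈ cyclesOf w := by
  simp only [cyclesOf, Finset.mem_filter, Finset.mem_univ, true_and]
  exact ⟨x, fun y => by simp⟩

lemma cyclesOf_nonempty {n : ℕ} {w : Equiv.Perm (Fin n)} {s : Finset (Fin n)}
    (hs : s ∈ cyclesOf w) : s.Nonempty := by
  simp only [cyclesOf, Finset.mem_filter] at hs
  obtain ⟨-, x, hx⟩ := hs
  exact ⟨x, (hx x).2 (Equiv.Perm.SameCycle.refl w x)⟩

lemma cyclesOf_eq_of_not_disjoint {n : ℕ} {w : Equiv.Perm (Fin n)} {s s' : Finset (Fin n)}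
    (hs : s ∈ cyclesOf w) (hs' : s' ∈ cyclesOf w) (h : ¬ Disjoint s s') : s = s' := by
  simp only [cyclesOf, Finset.mem_filter] at hs hs'
  obtain ⟨-, x, hx⟩ := hs
  obtain ⟨-, x', hx'⟩ := hs'
  rw [Finset.not_disjoint_iff] at h
  obtain ⟨y, hy, hy'⟩ := h
  have h1 := (hx y).1 hy
  have h2 := (hx' y).1 hy'
  ext z
  rw [hx z, hx' z]
  constructor
  · intro hz; exact h2.trans (h1.symm.trans hz)
  · intro hz; exact h1.trans (h2.symm.trans hz)

lemma biUnion_cyclesOf {n : ℕ} (w : Equiv.Perm (Fin n)) :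
    (cyclesOf w).biUnion id = Finset.univ := by
  ext y
  simp only [Finset.mem_biUnion, Finset.mem_univ, iff_true, id]
  exact ⟨_, mem_cyclesOf_self w y, by simp [Equiv.Perm.SameCycle.refl]⟩

lemma sum_card_cyclesOf {n : ℕ} (w : Equiv.Perm (Fin n)) :
    ∑ c ∈ cyclesOf w, c.card = n := by
  have h := Finset.card_biUnion (s := cyclesOf w) (t := id)
    (fun x hx y hy hxy => by
      by_contra hd
      exact hxy (cyclesOf_eq_of_not_disjoint hx hy hd))
  rw [biUnion_cyclesOf] at h
  simpa using h.symm
noncomputable def njc {n : ℕ} (w : Equiv.Perm (Fin n)) (j : ℕ) : ℕ :=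
  ((cyclesOf w).powerset.filter fun t => t.sum Finset.card = j).card

lemma eta_eq_card {n : ℕ} (w : Equiv.Perm (Fin n)) (mu : Multiset ℕ) :
    eta w mu = (Finset.univ.filter fun T : Finset (Finset (Fin n)) =>
      (∀ c ∈ T, c ∈ cyclesOf w) ∧ T.val.map Finset.card = mu).card := by
  rw [eta, Nat.card_eq_fintype_card, Fintype.card_subtype]

lemma sum_eta_eq_njc {n : ℕ} (w : Equiv.Perm (Fin n)) (j : ℕ) :
    ∑ μ : Nat.Partition j, eta w μ.parts = njc w j := by
  have key : ((cyclesOf w).powerset.filter fun t => t.sum Finset.card = j)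
      = (Finset.univ : Finset (Nat.Partition j)).biUnion
        (fun μ => Finset.univ.filter fun T : Finset (Finset (Fin n)) =>
          (∀ c ∈ T, c ∈ cyclesOf w) ∧ T.val.map Finset.card = μ.parts) := by
    ext T
    simp only [Finset.mem_filter, Finset.mem_powerset, Finset.mem_biUnion, Finset.mem_univ,
      true_and]
    constructor
    · rintro ⟨hT, hsum⟩
      refine ⟨⟨T.val.map Finset.card, ?_, ?_⟩, fun c hc => hT hc, rfl⟩
      · intro i hi
        simp only [Multiset.mem_map] at hi
        obtain ⟨c, hc, rfl⟩ := hi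
        exact Finset.card_pos.2 (cyclesOf_nonempty (hT hc))
      · exact hsum
    · rintro ⟨μ, hT, hmap⟩
      refine ⟨fun c hc => hT c hc, ?_⟩
      have := μ.parts_sum
      rw [← hmap] at this
      rw [Finset.sum]; exact this
  rw [njc, key, Finset.card_biUnion]
  · exact Finset.sum_congr rfl fun μ _ => eta_eq_card w μ.parts
  · intro μ _ μ' _ hne
    unfold Function.onFun
    rw [Finset.disjoint_left]
    intro T hT hT'
    simp only [Finset.mem_filter] at hT hT'
    exact hne (Nat.Partition.ext (hT.2.2.symm.trans hT'.2.2))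
lemma pair_finsupp_eq {a b a' b' : ℕ} :
    (Finsupp.single (0 : Fin 2) a + Finsupp.single 1 b =
      Finsupp.single 0 a' + Finsupp.single 1 b') ↔ (a = a' ∧ b = b') := by
  constructor
  · intro h
    have h0 := DFunLike.congr_fun h 0
    have h1 := DFunLike.congr_fun h 1
    simp [Finsupp.single_apply] at h0 h1
    exact ⟨h0, h1⟩
  · rintro ⟨rfl, rfl⟩; rfl

lemma coeff_cycle_prod {n : ℕ} (w : Equiv.Perm (Fin n)) (a b : ℕ) (hab : a + b = n) :
    MvPolynomial.coeff (Finsupp.single 0 a + Finsupp.single 1 b)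
      (∏ c ∈ cyclesOf w,
        ((MvPolynomial.X 0 : MvPolynomial (Fin 2) ℤ) ^ c.card + MvPolynomial.X 1 ^ c.card))
      = (njc w b : ℤ) := by
  rw [Finset.prod_add]
  have hterm : ∀ t ∈ (cyclesOf w).powerset,
      (∏ c ∈ t, (MvPolynomial.X 0 : MvPolynomial (Fin 2) ℤ) ^ c.card) *
        ∏ c ∈ cyclesOf w \ t, MvPolynomial.X 1 ^ c.card
      = MvPolynomial.monomial
          (Finsupp.single 0 (∑ c ∈ t, c.card) +
            Finsupp.single 1 (∑ c ∈ cyclesOf w \ t, c.card)) 1 := by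
    intro t _
    rw [Finset.prod_pow_eq_pow_sum, Finset.prod_pow_eq_pow_sum,
      MvPolynomial.X_pow_eq_monomial, MvPolynomial.X_pow_eq_monomial,
      MvPolynomial.monomial_mul, mul_one]
  rw [Finset.sum_congr rfl hterm, MvPolynomial.coeff_sum]
  have hcond : ∀ t ∈ (cyclesOf w).powerset,
      ((Finsupp.single (0 : Fin 2) (∑ c ∈ t, c.card) +
        Finsupp.single 1 (∑ c ∈ cyclesOf w \ t, c.card)) =
        Finsupp.single 0 a + Finsupp.single 1 b) ↔
      (∑ c ∈ cyclesOf w \ t, c.card = b) := by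
    intro t ht
    rw [Finset.mem_powerset] at ht
    rw [pair_finsupp_eq]
    have hsum : (∑ c ∈ cyclesOf w \ t, c.card) + ∑ c ∈ t, c.card = n := by
      rw [Finset.sum_sdiff ht, sum_card_cyclesOf]
    constructor
    · rintro ⟨-, h2⟩; exact h2
    · intro h2
      refine ⟨?_, h2⟩
      omega
  have : ∀ t ∈ (cyclesOf w).powerset,
      MvPolynomial.coeff (Finsupp.single (0 : Fin 2) a + Finsupp.single 1 b)
        (MvPolynomial.monomial
          (Finsupp.single 0 (∑ c ∈ t, c.card) +
            Finsupp.single 1 (∑ c ∈ cyclesOf w \ t, c.card)) (1 : ℤ))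
      = if ∑ c ∈ cyclesOf w \ t, c.card = b then 1 else 0 := by
    intro t ht
    rw [MvPolynomial.coeff_monomial]
    simp only [hcond t ht]
  rw [Finset.sum_congr rfl this, Finset.sum_boole]
  norm_cast
  apply Finset.card_nbij (fun t => cyclesOf w \ t)
  · intro t ht
    simp only [Finset.coe_filter, Set.mem_setOf_eq, Finset.mem_filter, Finset.mem_powerset] at *
    exact ⟨Finset.sdiff_subset, ht.2⟩
  · intro t ht t' ht' h
    simp only [Finset.coe_filter, Set.mem_setOf_eq, Finset.mem_powerset] at ht ht'
    have := congrArg (fun u => cyclesOf w \ u) h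
    simpa [Finset.sdiff_sdiff_eq_self ht.1, Finset.sdiff_sdiff_eq_self ht'.1] using this
  · intro u hu
    simp only [Finset.coe_filter, Set.mem_setOf_eq, Finset.mem_powerset] at hu
    refine ⟨cyclesOf w \ u, ?_, ?_⟩
    · simp only [Finset.coe_filter, Set.mem_setOf_eq, Finset.mem_powerset]
      constructor
      · exact Finset.sdiff_subset
      · rw [Finset.sdiff_sdiff_eq_self hu.1]; exact hu.2
    · simp [Finset.sdiff_sdiff_eq_self hu.1]
set_option maxHeartbeats 1000000 in
lemma chiFrob_pair {n : ℕ} (w : Equiv.Perm (Fin n)) (a b : ℕ) :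
    chiFrob w [a, b] =
      MvPolynomial.coeff (Finsupp.single (0 : Fin 2) (a + 1) + Finsupp.single 1 b)
        ((MvPolynomial.X 0 - MvPolynomial.X 1) *
          ∏ c ∈ cyclesOf w, ((MvPolynomial.X 0 : MvPolynomial (Fin 2) ℤ) ^ c.card
            + MvPolynomial.X 1 ^ c.card)) := by
  unfold chiFrob
  congr 1
  · ext i
    fin_cases i <;> simp [Finsupp.single_apply]
  · congr 1
    · have h : (Finset.univ.filter fun p : Fin 2 × Fin 2 => p.1 < p.2)
          = {((0 : Fin 2), (1 : Fin 2))} := by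
          ext ⟨i, j⟩; fin_cases i <;> fin_cases j <;> simp
      rw [show (Finset.univ.filter
          fun p : Fin ([a,b].length) × Fin ([a,b].length) => p.1 < p.2)
          = {((0 : Fin 2), (1 : Fin 2))} from h, Finset.prod_singleton]
    · exact Finset.prod_congr rfl fun c _ => Fin.sum_univ_two _
lemma single_split_left (A B : ℕ) (hA : 1 ≤ A) :
    Finsupp.single (0 : Fin 2) A + Finsupp.single 1 B =
      Finsupp.single 0 1 + (Finsupp.single 0 (A - 1) + Finsupp.single 1 B) := by
  have h : A = 1 + (A - 1) := by omega
  conv_lhs => rw [h]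
  rw [Finsupp.single_add, add_assoc]

lemma single_split_right (A B : ℕ) (hB : 1 ≤ B) :
    Finsupp.single (0 : Fin 2) A + Finsupp.single 1 B =
      Finsupp.single 1 1 + (Finsupp.single 0 A + Finsupp.single 1 (B - 1)) := by
  have h : B = 1 + (B - 1) := by omega
  conv_lhs => rw [h]
  rw [Finsupp.single_add]
  abel

theorem stmt13 (n k : ℕ) (hk : 1 ≤ k) (hnk : 2 * k ≤ n) (w : Equiv.Perm (Fin n)) :
    chiFrob w [n - k, k] =
      (∑ μ : Nat.Partition k, (eta w μ.parts : ℤ)) -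
        ∑ μ : Nat.Partition (k - 1), (eta w μ.parts : ℤ) := by
  rw [chiFrob_pair, sub_mul, MvPolynomial.coeff_sub]
  have c1 : MvPolynomial.coeff
      (Finsupp.single (0 : Fin 2) (n - k + 1) + Finsupp.single 1 k)
      (MvPolynomial.X 0 * ∏ c ∈ cyclesOf w,
        ((MvPolynomial.X 0 : MvPolynomial (Fin 2) ℤ) ^ c.card + MvPolynomial.X 1 ^ c.card))
      = (njc w k : ℤ) := by
    rw [single_split_left _ _ (by omega), show n - k + 1 - 1 = n - k from by omega,
      MvPolynomial.coeff_X_mul, coeff_cycle_prod w (n - k) k (by omega)]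
  have c2 : MvPolynomial.coeff
      (Finsupp.single (0 : Fin 2) (n - k + 1) + Finsupp.single 1 k)
      (MvPolynomial.X 1 * ∏ c ∈ cyclesOf w,
        ((MvPolynomial.X 0 : MvPolynomial (Fin 2) ℤ) ^ c.card + MvPolynomial.X 1 ^ c.card))
      = (njc w (k - 1) : ℤ) := by
    rw [single_split_right _ _ hk,
      MvPolynomial.coeff_X_mul, coeff_cycle_prod w (n - k + 1) (k - 1) (by omega)]
  rw [c1, c2, ← sum_eta_eq_njc, ← sum_eta_eq_njc]
  push_cast
  ring
end
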